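/- Fix N ∈ ℕ and 0 = t_0 < t_1 < ⋯ < t_s = N. For m = 1,…,s let η_m ∈ ℂ^N equal (t_m − t_{m−1})^{−1/2} on {t_{m−1}+1,…,t_m} and 0 elsewhere, and let (Aη_m)_k = N^{−1/2} ∑_{j=1}^N (η_m)_j e^{2πi jk/N}. Then for every m = 1,…,s and every k ∈ ℤ with 1 ≤ |k| ≤ ⌈N/2⌉, |(Aη_m)_k| ≤ (π/√2)·min{ √(t_m − t_{m−1})/√N, √N/(|k|·√(t_m − t_{m−1})) }, and for k = 0, |(Aη_m)_0| ≤ √(t_m − t_{m−1})/√N. -/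

import Mathlib

open Finset Complex Real

lemma norm_exp_sub_one (θ : ℝ) :
    ‖Complex.exp (θ * Complex.I) - 1‖ = 2 * |Real.sin (θ/2)| := by
  rw [Real.abs_sin_half, Complex.norm_def, Complex.normSq_apply]
  have h1 : Real.sin θ ^ 2 + Real.cos θ ^ 2 = 1 := Real.sin_sq_add_cos_sq θ
  simp only [Complex.sub_re, Complex.sub_im, Complex.exp_ofReal_mul_I_re,
    Complex.exp_ofReal_mul_I_im, Complex.one_re, Complex.one_im]
  rw [show (2:ℝ) * Real.sqrt ((1 - Real.cos θ)/2) = Real.sqrt (4 * ((1 - Real.cos θ)/2)) by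
    rw [Real.sqrt_mul (by norm_num), show Real.sqrt 4 = 2 by
      rw [show (4:ℝ) = 2^2 by norm_num, Real.sqrt_sq (by norm_num)]]]
  congr 1
  nlinarith

lemma sqrt_two_le_two : Real.sqrt 2 ≤ 2 := by
  nlinarith [Real.sq_sqrt (show (0:ℝ) ≤ 2 by norm_num), Real.sqrt_nonneg 2]

lemma sin_lb (N K : ℕ) (hN : 2 ≤ N) (hK1 : 1 ≤ K) (hK2 : K ≤ (N+1)/2) :
    Real.sqrt 2 / Real.pi * ((K:ℝ) / N) ≤ Real.sin (Real.pi * K / N) := by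
  have hKN : 2 * K ≤ N + 1 := by omega
  have hNpos : (0:ℝ) < N := by positivity
  have hKpos : (0:ℝ) < K := by exact_mod_cast hK1
  have hpi := Real.pi_pos
  have hs2 := sqrt_two_le_two
  have hs2n := Real.sqrt_nonneg 2
  by_cases h : 2 * K ≤ N
  · have hhalf : (K:ℝ) / N ≤ 1/2 := by
      rw [div_le_div_iff₀ hNpos (by norm_num)]
      push_cast
      nlinarith [(show (2*K:ℝ) ≤ N by exact_mod_cast h)]
    have hb : Real.pi * K / N ≤ Real.pi / 2 := by
      rw [div_le_div_iff₀ hNpos (by norm_num)]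
      nlinarith [(show (2*K:ℝ) ≤ N by exact_mod_cast h)]
    have := Real.mul_le_sin (x := Real.pi * K / N) (by positivity) hb
    have heq : 2 / Real.pi * (Real.pi * K / N) = 2 * ((K:ℝ)/N) := by
      field_simp
    rw [heq] at this
    have hd : Real.sqrt 2 / Real.pi ≤ 2 := by
      rw [div_le_iff₀ hpi]; nlinarith [Real.pi_gt_three]
    have := mul_le_mul_of_nonneg_right hd (div_nonneg hKpos.le hNpos.le)
    linarith
  · -- N odd, 2K = N+1
    have h2K : 2 * K = N + 1 := by omega
    have hK2' : 2 ≤ K := by omega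
    have hNK : N - K = K - 1 := by omega
    have hNr : (N:ℝ) = 2 * K - 1 := by
      have : (2*K:ℝ) = (N:ℝ) + 1 := by exact_mod_cast h2K
      linarith
    have hsin_eq : Real.sin (Real.pi * K / N) = Real.sin (Real.pi * (K - 1) / N) := by
      rw [← Real.sin_pi_sub]
      congr 1
      field_simp
      nlinarith [hNr]
    have hb : Real.pi * ((K:ℝ) - 1) / N ≤ Real.pi / 2 := by
      rw [div_le_div_iff₀ hNpos (by norm_num)]
      nlinarith [(show (2:ℝ) ≤ K by exact_mod_cast hK2')]
    have hnn : (0:ℝ) ≤ Real.pi * ((K:ℝ)-1) / N := by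
      apply div_nonneg _ hNpos.le
      nlinarith [(show (1:ℝ) ≤ K by exact_mod_cast hK1)]
    have := Real.mul_le_sin hnn hb
    have heq : 2 / Real.pi * (Real.pi * ((K:ℝ)-1) / N) = 2 * (((K:ℝ)-1)/N) := by
      field_simp
    rw [heq] at this
    rw [hsin_eq]
    have key : Real.sqrt 2 / Real.pi * ((K:ℝ)/N) ≤ 2 * (((K:ℝ)-1)/N) := by
      rw [show Real.sqrt 2 / Real.pi * ((K:ℝ)/N) = (Real.sqrt 2 * K)/(Real.pi*N) by ring,
        show (2:ℝ)*(((K:ℝ)-1)/N) = (2*((K:ℝ)-1))/N by ring,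
        div_le_div_iff₀ (by positivity) hNpos]
      have hKK : (K:ℝ) ≤ 2 * ((K:ℝ) - 1) := by
        nlinarith [(show (2:ℝ) ≤ K by exact_mod_cast hK2')]
      have hps : Real.sqrt 2 ≤ Real.pi := by nlinarith [Real.pi_gt_three]
      have h1 : (0:ℝ) ≤ (N:ℝ) * (Real.pi * (2*((K:ℝ)-1) - K)) :=
        mul_nonneg hNpos.le (mul_nonneg hpi.le (by linarith))
      have h2 : (0:ℝ) ≤ ((K:ℝ)*N) * (Real.pi - Real.sqrt 2) :=
        mul_nonneg (mul_nonneg hKpos.le hNpos.le) (by linarith)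
      linarith [h1, h2]
    linarith

/-- The (unitary) DFT of `y : ℂ^N` (entries `y 1, …, y N`) at frequency `k ∈ ℤ`. -/
noncomputable def dft (N : ℕ) (y : ℕ → ℂ) (k : ℤ) : ℂ :=
  (Real.sqrt N)⁻¹ * ∑ j ∈ Finset.Icc 1 N, y j *
    Complex.exp (2 * Real.pi * Complex.I * (j : ℂ) * (k : ℂ) / (N : ℂ))

/-- `η_m ∈ ℂ^N`: equal to `(t_m - t_{m-1})^{-1/2}` on `{t_{m-1}+1,…,t_m}`, `0` elsewhere. -/
noncomputable def eta (t : ℕ → ℕ) (m : ℕ) (i : ℕ) : ℂ :=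
  if t (m - 1) < i ∧ i ≤ t m then ((Real.sqrt (t m - t (m - 1)) : ℂ))⁻¹ else 0

set_option maxHeartbeats 1000000 in
theorem stmt13 (N s : ℕ) (t : ℕ → ℕ)
    (ht0 : t 0 = 0) (hts : t s = N) (hmono : ∀ i < s, t i < t (i + 1)) :
    ∀ m ∈ Finset.Icc 1 s,
      (∀ k : ℤ, 1 ≤ k.natAbs → k.natAbs ≤ (N + 1) / 2 →
        ‖dft N (eta t m) k‖ ≤
          (Real.pi / Real.sqrt 2) *
            min (Real.sqrt (t m - t (m - 1)) / Real.sqrt N)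
              (Real.sqrt N / (|(k : ℝ)| * Real.sqrt (t m - t (m - 1))))) ∧
      ‖dft N (eta t m) 0‖ ≤ Real.sqrt (t m - t (m - 1)) / Real.sqrt N := by
  intro m hm
  rw [Finset.mem_Icc] at hm
  obtain ⟨hm1, hms⟩ := hm
  have hmono' : ∀ j, j ≤ s → ∀ i, i ≤ j → t i ≤ t j := by
    intro j
    induction j with
    | zero => intro _ i hi; simp [Nat.le_zero.mp hi]
    | succ j ih =>
      intro hjs i hi
      rcases Nat.lt_or_ge i (j+1) with h | h
      · have h1 : t i ≤ t j := ih (by omega) i (by omega)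
        have h2 : t j < t (j+1) := hmono j (by omega)
        omega
      · have hij : i = j + 1 := by omega
        rw [hij]
  have hab : t (m-1) < t m := by
    have := hmono (m-1) (by omega)
    rwa [show m-1+1 = m by omega] at this
  set a := t (m-1) with ha
  set b := t m with hb
  have hbN : b ≤ N := by rw [← hts]; exact hmono' s le_rfl m hms
  have hN1 : 1 ≤ N := by omega
  set L := b - a with hL
  have hL1 : 1 ≤ L := by omega
  have hcastL : ((b:ℝ) - (a:ℝ)) = (L:ℝ) := by
    rw [hL]; push_cast [Nat.cast_sub hab.le]; ring
  have hLpos : (0:ℝ) < L := by exact_mod_cast hL1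
  have hNpos : (0:ℝ) < N := by exact_mod_cast hN1
  have hsLpos : 0 < Real.sqrt L := Real.sqrt_pos.mpr hLpos
  have hsNpos : 0 < Real.sqrt N := Real.sqrt_pos.mpr hNpos
  have hsL : Real.sqrt L * Real.sqrt L = (L:ℝ) := Real.mul_self_sqrt hLpos.le
  have hsN : Real.sqrt N * Real.sqrt N = (N:ℝ) := Real.mul_self_sqrt hNpos.le
  have hpi := Real.pi_pos
  have hs2pos : (0:ℝ) < Real.sqrt 2 := Real.sqrt_pos.mpr (by norm_num)
  have hsub : Finset.Icc (a+1) b ⊆ Finset.Icc 1 N := by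
    intro x hx; rw [Finset.mem_Icc] at *; omega
  have hdft : ∀ k : ℤ, dft N (_root_.eta t m) k =
      ((Real.sqrt N : ℝ) : ℂ)⁻¹ * ((Real.sqrt L : ℝ) : ℂ)⁻¹ *
        ∑ j ∈ Finset.Icc (a+1) b,
          Complex.exp (2 * Real.pi * Complex.I * (j:ℂ) * (k:ℂ) / (N:ℂ)) := by
    intro k
    unfold dft
    have hsum0 : (∑ j ∈ Finset.Icc 1 N, _root_.eta t m j *
          Complex.exp (2 * Real.pi * Complex.I * (j:ℂ) * (k:ℂ) / (N:ℂ)))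
        = ∑ j ∈ Finset.Icc (a+1) b, _root_.eta t m j *
          Complex.exp (2 * Real.pi * Complex.I * (j:ℂ) * (k:ℂ) / (N:ℂ)) :=
      (Finset.sum_subset hsub (by
        intro x hx hx'
        rw [Finset.mem_Icc] at hx hx'
        have h0 : _root_.eta t m x = 0 := by
          unfold _root_.eta; rw [if_neg]; push_neg; intro h1; omega
        rw [h0, zero_mul])).symm
    have hsum1 : (∑ j ∈ Finset.Icc (a+1) b, _root_.eta t m j *
          Complex.exp (2 * Real.pi * Complex.I * (j:ℂ) * (k:ℂ) / (N:ℂ)))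
        = ((Real.sqrt L : ℝ) : ℂ)⁻¹ * ∑ j ∈ Finset.Icc (a+1) b,
          Complex.exp (2 * Real.pi * Complex.I * (j:ℂ) * (k:ℂ) / (N:ℂ)) := by
      rw [Finset.mul_sum]
      refine Finset.sum_congr rfl fun j hj => ?_
      rw [Finset.mem_Icc] at hj
      unfold _root_.eta
      rw [if_pos (by constructor <;> omega)]
      rw [show ((b : ℝ) - (a : ℝ)) = (L:ℝ) from hcastL]
    rw [hsum0, hsum1]
    push_cast
    ring
  have habs : ∀ k : ℤ, ‖dft N (_root_.eta t m) k‖ =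
      (Real.sqrt N)⁻¹ * (Real.sqrt L)⁻¹ *
        ‖∑ j ∈ Finset.Icc (a+1) b,
          Complex.exp (2 * Real.pi * Complex.I * (j:ℂ) * (k:ℂ) / (N:ℂ))‖ := by
    intro k
    rw [hdft k, norm_mul, norm_mul, norm_inv, norm_inv, Complex.norm_real, Complex.norm_real,
      Real.norm_eq_abs, Real.norm_eq_abs,
      _root_.abs_of_nonneg (Real.sqrt_nonneg _), _root_.abs_of_nonneg (Real.sqrt_nonneg _)]
  have hEabs : ∀ k : ℤ, ∀ j : ℕ,
      ‖Complex.exp (2 * Real.pi * Complex.I * (j:ℂ) * (k:ℂ) / (N:ℂ))‖ = 1 := by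
    intro k j
    rw [show (2 * (Real.pi:ℂ) * Complex.I * (j:ℂ) * (k:ℂ) / (N:ℂ))
        = ((2 * Real.pi * j * k / N : ℝ) : ℂ) * Complex.I by push_cast; ring]
    exact Complex.norm_exp_ofReal_mul_I _
  have hcard : (Finset.Icc (a+1) b).card = L := by
    rw [Nat.card_Icc]; omega
  have htri : ∀ k : ℤ, ‖∑ j ∈ Finset.Icc (a+1) b,
      Complex.exp (2 * Real.pi * Complex.I * (j:ℂ) * (k:ℂ) / (N:ℂ))‖ ≤ (L:ℝ) := by
    intro k
    refine le_trans (norm_sum_le _ _) ?_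
    rw [Finset.sum_congr rfl (fun j _ => hEabs k j), Finset.sum_const, hcard,
      nsmul_eq_mul, mul_one]
  have hform : (Real.sqrt N)⁻¹ * (Real.sqrt L)⁻¹ * (L:ℝ) = Real.sqrt L / Real.sqrt N := by
    rw [eq_div_iff (ne_of_gt hsNpos)]
    field_simp
    nlinarith [hsL]
  have hgoal0 : ‖dft N (_root_.eta t m) 0‖ = Real.sqrt L / Real.sqrt N := by
    rw [habs 0]
    have hone : ∀ j ∈ Finset.Icc (a+1) b,
        Complex.exp (2 * Real.pi * Complex.I * (j:ℂ) * (((0:ℤ)):ℂ) / (N:ℂ)) = 1 := by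
      intro j _
      rw [show (2 * (Real.pi:ℂ) * Complex.I * (j:ℂ) * (((0:ℤ)):ℂ) / (N:ℂ)) = 0 by
        push_cast; ring, Complex.exp_zero]
    rw [Finset.sum_congr rfl hone, Finset.sum_const, hcard, nsmul_eq_mul, mul_one,
      Complex.norm_natCast]
    exact hform
  constructor
  · intro k hk1 hk2
    rw [show ((b:ℝ) - (a:ℝ)) = (L:ℝ) from hcastL]
    set K := k.natAbs with hK
    have hKpos : (0:ℝ) < K := by exact_mod_cast hk1
    have habsk : |(k:ℝ)| = (K:ℝ) := by
      rw [hK, Nat.cast_natAbs]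
      push_cast
      rfl
    have hmin : (Real.pi / Real.sqrt 2) *
        min (Real.sqrt L / Real.sqrt N) (Real.sqrt N / (|(k:ℝ)| * Real.sqrt L))
        = min ((Real.pi / Real.sqrt 2) * (Real.sqrt L / Real.sqrt N))
            ((Real.pi / Real.sqrt 2) * (Real.sqrt N / (|(k:ℝ)| * Real.sqrt L))) := by
      rw [mul_min_of_nonneg _ _ (by positivity)]
    rw [hmin]
    have hpis2 : 1 ≤ Real.pi / Real.sqrt 2 := by
      rw [le_div_iff₀ hs2pos]; nlinarith [Real.pi_gt_three, sqrt_two_le_two]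
    have habsS := habs k
    set S := ∑ j ∈ Finset.Icc (a+1) b,
      Complex.exp (2 * Real.pi * Complex.I * (j:ℂ) * (k:ℂ) / (N:ℂ)) with hSdef
    apply le_min
    · -- first bound, via triangle inequality
      rw [habsS]
      have step1 : (Real.sqrt N)⁻¹ * (Real.sqrt L)⁻¹ * ‖S‖
          ≤ (Real.sqrt N)⁻¹ * (Real.sqrt L)⁻¹ * (L:ℝ) := by
        gcongr
        exact htri k
      rw [hform] at step1
      refine step1.trans ?_
      nlinarith [div_pos hsLpos hsNpos]
    · -- second bound, via geometric series
      rcases Nat.lt_or_ge N 2 with hN2 | hN2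
      · -- N = 1
        have hNe : N = 1 := by omega
        have hKe : K = 1 := by omega
        have hLe : L = 1 := by omega
        have e1 : Real.sqrt (N:ℝ) = 1 := by rw [hNe]; simp
        have e2 : Real.sqrt (L:ℝ) = 1 := by rw [hLe]; simp
        have eK : (K:ℝ) = 1 := by rw [hKe]; norm_num
        have eL : (L:ℝ) = 1 := by rw [hLe]; norm_num
        rw [habsS, e1, e2, habsk, eK]
        simp only [inv_one, one_mul, mul_one, div_one]
        have := htri k
        rw [eL] at this
        linarith [hpis2]
      · -- N ≥ 2
        have hKN : K < N := by omega
        have hNC : (N:ℂ) ≠ 0 := by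
          exact_mod_cast (show ((N:ℝ)) ≠ 0 from ne_of_gt hNpos)
        set z := Complex.exp (2 * Real.pi * Complex.I * (k:ℂ) / (N:ℂ)) with hz
        have hz1 : z ≠ 1 := by
          intro hone
          rw [hz, Complex.exp_eq_one_iff] at hone
          obtain ⟨n, hn⟩ := hone
          have h2πI : (2 * (Real.pi:ℂ) * Complex.I) ≠ 0 := by
            apply mul_ne_zero
            apply mul_ne_zero
            · norm_num
            · exact_mod_cast Complex.ofReal_ne_zero.mpr Real.pi_ne_zero
            · exact Complex.I_ne_zero
          have hkC : (k:ℂ) = (n:ℂ) * (N:ℂ) := by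
            have h' : 2 * (Real.pi:ℂ) * Complex.I * (k:ℂ)
                = (n:ℂ) * (2 * (Real.pi:ℂ) * Complex.I) * (N:ℂ) := by
              have := congrArg (· * (N:ℂ)) hn
              simpa [div_mul_cancel₀, hNC] using this
            have h'' : (2 * (Real.pi:ℂ) * Complex.I) * (k:ℂ)
                = (2 * (Real.pi:ℂ) * Complex.I) * ((n:ℂ) * (N:ℂ)) := by
              rw [h']; ring
            exact mul_left_cancel₀ h2πI h''
          have hkn' : k = n * (N:ℤ) := by exact_mod_cast hkC
          have hn0 : n ≠ 0 := by
            intro h0; rw [h0, zero_mul] at hkn'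
            rw [hK, hkn'] at hk1; simp at hk1
          have hNK2 : N ≤ K := by
            rw [hK, hkn', Int.natAbs_mul, Int.natAbs_natCast]
            calc N = 1 * N := (one_mul N).symm
              _ ≤ n.natAbs * N := Nat.mul_le_mul_right N (by omega)
          omega
        have hzj : ∀ j : ℕ, Complex.exp (2 * Real.pi * Complex.I * (j:ℂ) * (k:ℂ) / (N:ℂ))
            = z ^ j := by
          intro j
          rw [hz, ← Complex.exp_nat_mul]
          congr 1
          ring
        have hgeom : S = (z ^ (b+1) - z ^ (a+1)) / (z - 1) := by
          rw [hSdef, Finset.sum_congr rfl (fun j _ => hzj j)]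
          rw [show Finset.Icc (a+1) b = Finset.Ico (a+1) (b+1) by
            ext x; simp only [Finset.mem_Icc, Finset.mem_Ico]; omega]
          exact geom_sum_Ico hz1 (by omega)
        have hzabs : ‖z‖ = 1 := by
          rw [hz, show (2 * (Real.pi:ℂ) * Complex.I * (k:ℂ) / (N:ℂ))
            = ((2 * Real.pi * k / N : ℝ) : ℂ) * Complex.I by push_cast; ring]
          exact Complex.norm_exp_ofReal_mul_I _
        have hzsub : ‖z - 1‖ = 2 * |Real.sin (Real.pi * k / N)| := by
          rw [hz, show (2 * (Real.pi:ℂ) * Complex.I * (k:ℂ) / (N:ℂ))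
            = ((2 * Real.pi * k / N : ℝ) : ℂ) * Complex.I by push_cast; ring]
          rw [norm_exp_sub_one, show (2 * Real.pi * (k:ℝ) / (N:ℝ))/2
            = Real.pi * k / N by ring]
        have hsin_posK : 0 < Real.sin (Real.pi * K / N) := by
          apply Real.sin_pos_of_pos_of_lt_pi
          · positivity
          · rw [div_lt_iff₀ hNpos]
            nlinarith [(show (K:ℝ) < N by exact_mod_cast hKN)]
        have hsinK : |Real.sin (Real.pi * k / N)| = Real.sin (Real.pi * K / N) := by
          rcases Int.natAbs_eq k with h | h
          · rw [h]; push_cast; rw [habsk, _root_.abs_of_pos hsin_posK]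
          · rw [h]; push_cast; rw [habsk]
            rw [show Real.pi * (-(K:ℝ)) / N = -(Real.pi * K / N) by ring, Real.sin_neg,
              abs_neg, _root_.abs_of_pos hsin_posK]
        have hsin_lb := sin_lb N K hN2 hk1 hk2
        have hSle : ‖S‖ ≤ 1 / Real.sin (Real.pi * K / N) := by
          rw [hgeom, norm_div, hzsub, hsinK]
          rw [div_le_div_iff₀ (by positivity) hsin_posK]
          have h1 : ‖z ^ (b+1) - z ^ (a+1)‖ ≤ 2 := by
            refine le_trans (norm_sub_le _ _) ?_
            rw [norm_pow, norm_pow, hzabs]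
            norm_num
          nlinarith [hsin_posK, h1]
        rw [habsS, habsk]
        have step1 : (Real.sqrt N)⁻¹ * (Real.sqrt L)⁻¹ * ‖S‖
            ≤ (Real.sqrt N)⁻¹ * (Real.sqrt L)⁻¹ * (1 / Real.sin (Real.pi * K / N)) := by
          gcongr
        refine step1.trans ?_
        rw [show (Real.sqrt N)⁻¹ * (Real.sqrt L)⁻¹ * (1 / Real.sin (Real.pi * K / N))
            = 1 / (Real.sqrt N * Real.sqrt L * Real.sin (Real.pi * K / N)) by
          field_simp]
        rw [show (Real.pi / Real.sqrt 2) * (Real.sqrt N / ((K:ℝ) * Real.sqrt L))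
            = (Real.pi * Real.sqrt N) / (Real.sqrt 2 * ((K:ℝ) * Real.sqrt L)) by
          field_simp]
        rw [div_le_div_iff₀ (by positivity) (by positivity)]
        have hkey : Real.sqrt 2 * (K:ℝ) ≤ Real.pi * N * Real.sin (Real.pi * K / N) := by
          have hmul := mul_le_mul_of_nonneg_left hsin_lb (le_of_lt (mul_pos hpi hNpos))
          calc Real.sqrt 2 * (K:ℝ)
              = Real.pi * (N:ℝ) * (Real.sqrt 2 / Real.pi * ((K:ℝ)/(N:ℝ))) := by
                field_simp
            _ ≤ Real.pi * N * Real.sin (Real.pi * K / N) := hmul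
        calc 1 * (Real.sqrt 2 * ((K:ℝ) * Real.sqrt L))
            = (Real.sqrt 2 * (K:ℝ)) * Real.sqrt L := by ring
          _ ≤ (Real.pi * N * Real.sin (Real.pi * K / N)) * Real.sqrt L :=
              mul_le_mul_of_nonneg_right hkey (Real.sqrt_nonneg _)
          _ = Real.pi * Real.sqrt N * (Real.sqrt N * Real.sqrt L *
                Real.sin (Real.pi * K / N)) := by
              linear_combination (-(Real.pi * Real.sin (Real.pi * K / N) * Real.sqrt L)) * hsN
  · rw [show ((b:ℝ) - (a:ℝ)) = (L:ℝ) from hcastL]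
    exact le_of_eq hgoal0
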